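/- arXiv:1503.01249 — 3 statements merged into one kernel-verified Lean document; each statement's English description precedes it below -/
import Mathlib

section
/- Let ν : ℝ^q → ℝ be a multivariate polynomial (or a convergent multivariate power series around 0), and for a subset S ⊆ {1,...,q} let ν_S(b) denote ν evaluated at the vector whose coordinates in S equal those of b and whose remaining coordinates are 0. Then for 0 ≤ s < q, the Cut-HDMR approximation ν̂_s(b) := ∑_{i=0}^{s} (-1)^{s-i} C(q-i-1, s-i) ∑_{|S|=i} ν_S(b) equals the sum of all monomials of ν that involve at most s distinct variables. -/
open Finset

/-- For a function `f : ℝ^q → ℝ` and a subset `S ⊆ {1,...,q}`, `cutComponent f S b` is `f`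
evaluated at the vector whose coordinates in `S` equal those of `b` and whose remaining
coordinates are `0`. -/
noncomputable def cutComponent {q : ℕ} (f : (Fin q → ℝ) → ℝ) (S : Finset (Fin q))
    (b : Fin q → ℝ) : ℝ :=
  f fun k => if k ∈ S then b k else 0

/-- The `s`-variate Cut-HDMR approximation (anchored at `0`) of `f : ℝ^q → ℝ`:
`f̂_s(b) = ∑_{i=0}^{s} (-1)^{s-i} C(q-i-1, s-i) ∑_{|S|=i} f_S(b)`. -/
noncomputable def cutHDMR {q : ℕ} (s : ℕ) (f : (Fin q → ℝ) → ℝ) (b : Fin q → ℝ) : ℝ :=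
  ∑ i ∈ Finset.range (s + 1),
    (-1 : ℝ) ^ (s - i) * (Nat.choose (q - i - 1) (s - i)) *
      ∑ S ∈ (Finset.univ : Finset (Fin q)).powersetCard i, cutComponent f S b


lemma ring_multichoose_int (x : ℤ) (k : ℕ) : Ring.multichoose x k = Int.multichoose x k := rfl

lemma ring_choose_neg (a k : ℕ) (ha : 1 ≤ a) :
    Ring.choose (-(a : ℤ)) k = (-1) ^ k * ((a + k - 1).choose k : ℤ) := by
  cases k with
  | zero => simp
  | succ k =>
    have hx : (-(a : ℤ) - (k+1) + 1) = Int.negSucc (a + (k+1) - 2) := by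
      rw [Int.negSucc_eq]; push_cast [Nat.cast_sub (by omega : 2 ≤ a + (k+1))]; ring_nf
    show Ring.multichoose (-(a : ℤ) - (k+1) + 1) (k+1) = _
    rw [hx, ring_multichoose_int]
    simp only [Int.multichoose]
    have : a + (k+1) - 2 + 1 = a + (k+1) - 1 := by omega
    rw [this, Int.coe_negOnePow_natCast]

lemma key_int (n m : ℕ) (h : m < n) :
    ∑ j ∈ range (m+1), (-1:ℤ)^(m-j) * ((n-1-j).choose (m-j)) * (n.choose j) = 1 := by
  set a := n - m with ha
  have ha1 : 1 ≤ a := by omega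
  have hna : (-(a:ℤ)) + n = m := by omega
  have hvdm := Ring.add_choose_eq (R := ℤ) (r := -(a:ℤ)) (s := (n:ℤ)) m (Commute.all _ _)
  rw [hna, Ring.choose_natCast, Nat.choose_self] at hvdm
  rw [Finset.Nat.sum_antidiagonal_eq_sum_range_succ_mk] at hvdm
  rw [Nat.cast_one] at hvdm
  rw [← Finset.sum_range_reflect]
  refine (Finset.sum_congr rfl fun j hj => ?_).trans hvdm.symm
  rw [mem_range] at hj
  simp only [Nat.add_sub_cancel]
  rw [ring_choose_neg a j ha1, Ring.choose_natCast]
  have e1 : m - (m - j) = j := by omega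
  have e2 : n - 1 - (m - j) = a + j - 1 := by omega
  rw [e1, e2]


lemma prod_ite_pow {q : ℕ} (S : Finset (Fin q)) (b : Fin q → ℝ) (α : Fin q →₀ ℕ) :
    (∏ k, (if k ∈ S then b k else 0) ^ α k) =
      if α.support ⊆ S then ∏ k, b k ^ α k else 0 := by
  by_cases h : α.support ⊆ S
  · rw [if_pos h]
    refine Finset.prod_congr rfl fun k _ => ?_
    by_cases hk : k ∈ S
    · rw [if_pos hk]
    · have : α k = 0 := by
        by_contra hne
        exact hk (h (Finsupp.mem_support_iff.2 hne))
      rw [if_neg hk, this, pow_zero, pow_zero]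
  · rw [if_neg h]
    obtain ⟨k, hk, hkS⟩ := Finset.not_subset.1 h
    refine Finset.prod_eq_zero (Finset.mem_univ k) ?_
    rw [if_neg hkS, zero_pow (Finsupp.mem_support_iff.1 hk)]

lemma card_filter_superset {q : ℕ} (T : Finset (Fin q)) (i : ℕ) :
    (((Finset.univ : Finset (Fin q)).powersetCard i).filter (fun S => T ⊆ S)).card =
      if T.card ≤ i then (q - T.card).choose (i - T.card) else 0 := by
  by_cases h : T.card ≤ i
  · rw [if_pos h]
    have hc : ((Finset.univ : Finset (Fin q)) \ T).card = q - T.card := by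
      rw [Finset.card_sdiff_of_subset (Finset.subset_univ T), Finset.card_univ, Fintype.card_fin]
    rw [← hc, ← Finset.card_powersetCard]
    refine Finset.card_bij' (fun S _ => S \ T) (fun U _ => U ∪ T) ?_ ?_ ?_ ?_
    · intro S hS
      rw [Finset.mem_filter, Finset.mem_powersetCard] at hS
      obtain ⟨⟨_, hcard⟩, hTS⟩ := hS
      rw [Finset.mem_powersetCard]
      exact ⟨Finset.sdiff_subset_sdiff (Finset.subset_univ S) le_rfl,
        by rw [Finset.card_sdiff_of_subset hTS, hcard]⟩
    · intro U hU
      rw [Finset.mem_powersetCard] at hU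
      obtain ⟨hUsub, hUcard⟩ := hU
      have hdisj : Disjoint U T := Finset.disjoint_left.2 fun x hx =>
        (Finset.mem_sdiff.1 (hUsub hx)).2
      rw [Finset.mem_filter, Finset.mem_powersetCard]
      refine ⟨⟨Finset.subset_univ _, ?_⟩, Finset.subset_union_right⟩
      rw [Finset.card_union_of_disjoint hdisj, hUcard]
      omega
    · intro S hS
      rw [Finset.mem_filter] at hS
      exact Finset.sdiff_union_of_subset hS.2
    · intro U hU
      rw [Finset.mem_powersetCard] at hU
      have hdisj : Disjoint U T := Finset.disjoint_left.2 fun x hx =>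
        (Finset.mem_sdiff.1 (hU.1 hx)).2
      exact Finset.union_sdiff_cancel_right hdisj
  · rw [if_neg h, Finset.card_eq_zero, Finset.filter_eq_empty_iff]
    intro S hS
    rw [Finset.mem_powersetCard] at hS
    intro hTS
    exact h (hS.2 ▸ Finset.card_le_card hTS)


lemma key_real (n m : ℕ) (h : m < n) :
    ∑ j ∈ range (m+1), (-1:ℝ)^(m-j) * ((n-1-j).choose (m-j)) * (n.choose j) = 1 := by
  exact_mod_cast congrArg (Int.cast : ℤ → ℝ) (key_int n m h)

lemma coeff_indicator (q s t : ℕ) (hs : s < q) (ht : t ≤ q) :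
    ∑ i ∈ range (s+1), (-1:ℝ)^(s-i) * ((q-i-1).choose (s-i) : ℝ) *
      (if t ≤ i then ((q-t).choose (i-t) : ℝ) else 0) = if t ≤ s then 1 else 0 := by
  by_cases hts : t ≤ s
  · rw [if_pos hts]
    rw [← Finset.sum_subset (fun x hx => mem_range.2 (mem_Ico.1 hx).2 :
        Finset.Ico t (s+1) ⊆ range (s+1))]
    · rw [Finset.sum_Ico_eq_sum_range]
      have hrw : s + 1 - t = (s - t) + 1 := by omega
      rw [hrw]
      refine (Finset.sum_congr rfl fun j hj => ?_).trans (key_real (q - t) (s - t) (by omega))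
      rw [mem_range] at hj
      rw [if_pos (by omega : t ≤ t + j)]
      have e1 : s - (t + j) = s - t - j := by omega
      have e2 : q - (t + j) - 1 = q - t - 1 - j := by omega
      have e3 : t + j - t = j := by omega
      rw [e1, e2, e3]
    · intro i hi hni
      rw [mem_range] at hi
      rw [mem_Ico] at hni
      rw [if_neg (by omega), mul_zero]
  · rw [if_neg hts]
    refine Finset.sum_eq_zero fun i hi => ?_
    rw [mem_range] at hi
    rw [if_neg (by omega), mul_zero]

/-- **Theorem 1 of Xu and Rahman (2004).** For a multivariate polynomial `ν` on `ℝ^q` and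
`0 ≤ s < q`, the Cut-HDMR approximation `ν̂_s` equals the sum of all monomials of `ν` that
involve at most `s` distinct variables. -/
theorem cutHDMR_eq_low_interaction_part (q s : ℕ) (hs : s < q)
    (ν : MvPolynomial (Fin q) ℝ) (b : Fin q → ℝ) :
    cutHDMR s (fun x => MvPolynomial.eval x ν) b =
      ∑ α ∈ ν.support.filter (fun α => α.support.card ≤ s),
        ν.coeff α * ∏ k, b k ^ α k := by
  have hcut : ∀ S : Finset (Fin q),
      cutComponent (fun x => MvPolynomial.eval x ν) S b =
        ∑ α ∈ ν.support, if α.support ⊆ S then ν.coeff α * ∏ k, b k ^ α k else 0 := by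
    intro S
    unfold cutComponent
    simp only [MvPolynomial.eval_eq']
    refine Finset.sum_congr rfl fun α _ => ?_
    rw [prod_ite_pow, mul_ite, mul_zero]
  have hinner : ∀ i,
      ∑ S ∈ (Finset.univ : Finset (Fin q)).powersetCard i,
        cutComponent (fun x => MvPolynomial.eval x ν) S b =
      ∑ α ∈ ν.support,
        (if α.support.card ≤ i then ((q - α.support.card).choose (i - α.support.card) : ℝ)
          else 0) * (ν.coeff α * ∏ k, b k ^ α k) := by
    intro i
    simp only [hcut]
    rw [Finset.sum_comm]
    refine Finset.sum_congr rfl fun α _ => ?_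
    rw [← Finset.sum_filter, Finset.sum_const, nsmul_eq_mul, card_filter_superset]
    push_cast
    rfl
  unfold cutHDMR
  simp only [hinner]
  simp only [Finset.mul_sum]
  rw [Finset.sum_comm]
  have hco : ∀ α ∈ ν.support,
      ∑ i ∈ range (s+1), (-1:ℝ)^(s-i) * ((q-i-1).choose (s-i) : ℝ) *
        ((if α.support.card ≤ i then ((q - α.support.card).choose (i - α.support.card) : ℝ)
          else 0) * (ν.coeff α * ∏ k, b k ^ α k)) =
      (if α.support.card ≤ s then (1:ℝ) else 0) * (ν.coeff α * ∏ k, b k ^ α k) := by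
    intro α _
    rw [Finset.sum_congr rfl (fun i (_ : i ∈ range (s+1)) =>
      (mul_assoc ((-1:ℝ)^(s-i) * ((q-i-1).choose (s-i) : ℝ))
        (if α.support.card ≤ i then ((q - α.support.card).choose (i - α.support.card) : ℝ) else 0)
        (ν.coeff α * ∏ k, b k ^ α k)).symm), ← Finset.sum_mul]
    congr 1
    exact coeff_indicator q s α.support.card hs
      ((Finset.card_le_card (Finset.subset_univ _)).trans (by simp))
  refine (Finset.sum_congr rfl hco).trans ?_
  rw [Finset.sum_filter]
  refine Finset.sum_congr rfl fun α _ => ?_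
  rw [ite_mul, one_mul, zero_mul]
end

section
/- With the notation of Cut-HDMR, if ν : ℝ^q → ℝ is a polynomial in which every monomial involves at most s distinct variables, then ν̂_s = ν exactly. -/
open Finset

lemma aux_g (n : ℕ) : ∀ m, m < n →
    (∑ j ∈ range (m+1), (-1:ℝ)^j * (n.choose j) * ((n-1-j).choose (m-j))) = (-1)^m := by
  intro m
  induction m with
  | zero => intro _; simp
  | succ m ih =>
    intro hm
    have hm' : m < n := Nat.lt_of_succ_lt hm
    rw [Finset.sum_range_succ]
    have hsplit : ∀ j ∈ range (m+1),
        (-1:ℝ)^j * (n.choose j) * ((n-1-j).choose (m+1-j))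
          = (-1:ℝ)^j * (n.choose j) * ((n-j).choose (m+1-j))
            - (-1:ℝ)^j * (n.choose j) * ((n-1-j).choose (m-j)) := by
      intro j hj
      rw [mem_range] at hj
      have hj' : j ≤ m := Nat.lt_succ_iff.mp hj
      have h1 : n - j = (n - 1 - j) + 1 := by omega
      have h2 : m + 1 - j = (m - j) + 1 := by omega
      rw [h1, h2, Nat.choose_succ_succ]
      push_cast
      ring
    rw [Finset.sum_congr rfl hsplit, Finset.sum_sub_distrib, ih hm']
    have htri : ∀ j ∈ range (m+1),
        (-1:ℝ)^j * (n.choose j) * ((n-j).choose (m+1-j))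
          = (n.choose (m+1)) * ((-1:ℝ)^j * ((m+1).choose j)) := by
      intro j hj
      rw [mem_range] at hj
      have := Nat.choose_mul (n := n) (by omega : j ≤ m + 1)
      have hc : ((n.choose (m+1) : ℝ) * ((m+1).choose j)) = (n.choose j) * ((n-j).choose (m+1-j)) := by
        exact_mod_cast congrArg (Nat.cast (R := ℝ)) this
      calc (-1:ℝ)^j * (n.choose j) * ((n-j).choose (m+1-j))
          = (-1:ℝ)^j * ((n.choose j) * ((n-j).choose (m+1-j))) := by ring
        _ = (-1:ℝ)^j * ((n.choose (m+1) : ℝ) * ((m+1).choose j)) := by rw [hc]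
        _ = (n.choose (m+1)) * ((-1:ℝ)^j * ((m+1).choose j)) := by ring
    rw [Finset.sum_congr rfl htri, ← Finset.mul_sum]
    have halt : (∑ j ∈ range (m+2), (-1:ℝ)^j * ((m+1).choose j)) = 0 := by
      have := Int.alternating_sum_range_choose_of_ne (Nat.succ_ne_zero m)
      have : ((∑ i ∈ range (m+2), (-1:ℤ)^i * ((m+1).choose i) : ℤ) : ℝ) = ((0:ℤ):ℝ) := by
        exact_mod_cast congrArg (Int.cast (R := ℝ)) this
      push_cast at this
      convert this using 1
    have halt' : (∑ j ∈ range (m+1), (-1:ℝ)^j * ((m+1).choose j))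
        = -((-1:ℝ)^(m+1) * ((m+1).choose (m+1))) := by
      have := Finset.sum_range_succ (fun j => (-1:ℝ)^j * ((m+1).choose j)) (m+1)
      rw [halt] at this
      linarith
    rw [halt']
    simp only [Nat.choose_self, Nat.cast_one, mul_one]
    have : m + 1 - (m + 1) = 0 := by omega
    rw [this]
    simp [pow_succ]
    ring


lemma aux_id (n m : ℕ) (h : m < n) :
    (∑ j ∈ range (m+1), (-1:ℝ)^(m-j) * ((n-j-1).choose (m-j)) * (n.choose j)) = 1 := by
  have hg : (∑ j ∈ range (m+1), (-1:ℝ)^j * (n.choose j) * ((n-1-j).choose (m-j))) = (-1)^m :=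
    aux_g n m h
  have : (∑ j ∈ range (m+1), (-1:ℝ)^(m-j) * ((n-j-1).choose (m-j)) * (n.choose j))
      = (-1:ℝ)^m * ∑ j ∈ range (m+1), (-1:ℝ)^j * (n.choose j) * ((n-1-j).choose (m-j)) := by
    rw [Finset.mul_sum]
    refine Finset.sum_congr rfl fun j hj => ?_
    rw [mem_range] at hj
    have hj' : j ≤ m := Nat.lt_succ_iff.mp hj
    have h1 : n - j - 1 = n - 1 - j := by omega
    have h2 : (-1:ℝ)^(m-j) = (-1:ℝ)^m * (-1:ℝ)^j := by
      have : m - j + j = m := by omega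
      calc (-1:ℝ)^(m-j) = (-1:ℝ)^(m-j) * ((-1:ℝ)^j * (-1:ℝ)^j) := by
            rw [← pow_add]; simp [pow_mul_comm,  ← two_mul, pow_mul]
        _ = (-1:ℝ)^(m-j+j) * (-1:ℝ)^j := by rw [pow_add]; ring
        _ = (-1:ℝ)^m * (-1:ℝ)^j := by rw [this]
    rw [h1, h2]; ring
  rw [this, hg, ← pow_add, ← two_mul, pow_mul]
  simp


lemma card_superset (q i : ℕ) (T : Finset (Fin q)) (ht : T.card ≤ i) :
    (((univ : Finset (Fin q)).powersetCard i).filter (fun S => T ⊆ S)).card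
      = (q - T.card).choose (i - T.card) := by
  classical
  have hcard : (univ \ T : Finset (Fin q)).card = q - T.card := by
    rw [Finset.card_sdiff_of_subset (subset_univ T), Finset.card_univ, Fintype.card_fin]
  rw [← hcard, ← Finset.card_powersetCard]
  apply Finset.card_bij' (fun S _ => S \ T) (fun U _ => U ∪ T)
  · intro S hS
    simp only [mem_filter, mem_powersetCard] at hS
    simp only [mem_powersetCard]
    constructor
    · exact Finset.sdiff_subset_sdiff (subset_univ S) (Finset.Subset.refl T)
    · rw [Finset.card_sdiff_of_subset hS.2, hS.1.2]
  · intro U hU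
    simp only [mem_powersetCard] at hU
    have hdisj : Disjoint U T := by
      intro x hx1 hx2 y hy
      have := hU.1 (hx1 hy)
      simp only [mem_sdiff] at this
      exact absurd (hx2 hy) this.2
    simp only [mem_filter, mem_powersetCard]
    refine ⟨⟨subset_univ _, ?_⟩, Finset.subset_union_right⟩
    rw [Finset.card_union_of_disjoint hdisj, hU.2]
    omega
  · intro S hS
    simp only [mem_filter, mem_powersetCard] at hS
    exact Finset.sdiff_union_of_subset hS.2
  · intro U hU
    simp only [mem_powersetCard] at hU
    have hdisj : Disjoint U T := by
      intro x hx1 hx2 y hy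
      have := hU.1 (hx1 hy)
      simp only [mem_sdiff] at this
      exact absurd (hx2 hy) this.2
    rw [Finset.union_sdiff_distrib, Finset.sdiff_self, Finset.union_empty,
      Finset.sdiff_eq_self_of_disjoint hdisj]


lemma sum_cut_monomial (q : ℕ) (α : Fin q →₀ ℕ) (b : Fin q → ℝ) (i : ℕ) :
    ∑ S ∈ (univ : Finset (Fin q)).powersetCard i, ∏ k, (if k ∈ S then b k else 0)^(α k)
      = (if α.support.card ≤ i then ((q - α.support.card).choose (i - α.support.card) : ℝ) else 0)
          * ∏ k, b k ^ α k := by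
  classical
  have hterm : ∀ S ∈ (univ : Finset (Fin q)).powersetCard i,
      (∏ k, (if k ∈ S then b k else 0)^(α k))
        = if α.support ⊆ S then ∏ k, b k ^ α k else 0 := by
    intro S _
    by_cases h : α.support ⊆ S
    · rw [if_pos h]
      refine Finset.prod_congr rfl fun k _ => ?_
      by_cases hk : k ∈ S
      · rw [if_pos hk]
      · have : α k = 0 := by
          by_contra hne
          exact hk (h (Finsupp.mem_support_iff.mpr hne))
        rw [if_neg hk, this, pow_zero, pow_zero]
    · rw [if_neg h]
      obtain ⟨k, hk1, hk2⟩ := Finset.not_subset.mp h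
      apply Finset.prod_eq_zero (Finset.mem_univ k)
      rw [if_neg hk2, zero_pow (Finsupp.mem_support_iff.mp hk1)]
  rw [Finset.sum_congr rfl hterm, Finset.sum_ite, Finset.sum_const, Finset.sum_const,
    smul_zero, add_zero, nsmul_eq_mul]
  by_cases ht : α.support.card ≤ i
  · rw [if_pos ht, card_superset q i α.support ht]
  · rw [if_neg ht]
    have : ((univ : Finset (Fin q)).powersetCard i).filter (fun S => α.support ⊆ S) = ∅ := by
      rw [Finset.filter_eq_empty_iff]
      intro S hS
      rw [mem_powersetCard] at hS
      intro hsub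
      exact ht (hS.2 ▸ Finset.card_le_card hsub)
    rw [this]; simp


lemma inner_sum_eq_one (q s t : ℕ) (hts : t ≤ s) (hs : s < q) :
    (∑ i ∈ range (s+1), (-1:ℝ)^(s-i) * ((q-i-1).choose (s-i)) *
        (if t ≤ i then ((q-t).choose (i-t) : ℝ) else 0)) = 1 := by
  have hsplit : (∑ i ∈ range (s+1), (-1:ℝ)^(s-i) * ((q-i-1).choose (s-i)) *
        (if t ≤ i then ((q-t).choose (i-t) : ℝ) else 0))
      = ∑ i ∈ Ico t (s+1), (-1:ℝ)^(s-i) * ((q-i-1).choose (s-i)) * ((q-t).choose (i-t)) := by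
    rw [Finset.range_eq_Ico, ← Finset.sum_Ico_consecutive _ (Nat.zero_le t) (by omega : t ≤ s+1)]
    have h1 : ∑ i ∈ Ico 0 t, (-1:ℝ)^(s-i) * ((q-i-1).choose (s-i)) *
        (if t ≤ i then ((q-t).choose (i-t) : ℝ) else 0) = 0 := by
      apply Finset.sum_eq_zero
      intro i hi
      rw [Finset.mem_Ico] at hi
      rw [if_neg (by omega), mul_zero]
    rw [h1, zero_add]
    refine Finset.sum_congr rfl fun i hi => ?_
    rw [Finset.mem_Ico] at hi
    rw [if_pos hi.1]
  rw [hsplit, Finset.sum_Ico_eq_sum_range]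
  have hst : s + 1 - t = (s - t) + 1 := by omega
  rw [hst]
  refine Eq.trans (Finset.sum_congr rfl fun j hj => ?_) (aux_id (q - t) (s - t) (by omega))
  rw [mem_range] at hj
  have e1 : s - (t + j) = s - t - j := by omega
  have e2 : q - (t + j) - 1 = q - t - j - 1 := by omega
  have e3 : t + j - t = j := by omega
  rw [e1, e2, e3]


/-- If `ν : ℝ^q → ℝ` is a polynomial in which every monomial involves at most `s` distinct
variables, then the truncated Cut-HDMR expansion is exact: `ν̂_s = ν`. -/
theorem cutHDMR_exact_of_low_interaction (q s : ℕ) (hs : s < q)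
    (ν : MvPolynomial (Fin q) ℝ)
    (hν : ∀ α ∈ ν.support, α.support.card ≤ s) (b : Fin q → ℝ) :
    cutHDMR s (fun x => MvPolynomial.eval x ν) b = MvPolynomial.eval b ν := by
  classical
  unfold cutHDMR cutComponent
  simp only [MvPolynomial.eval_eq' _ ν]
  have step1 : ∀ i : ℕ,
      (∑ S ∈ (univ : Finset (Fin q)).powersetCard i,
          ∑ α ∈ ν.support, MvPolynomial.coeff α ν * ∏ k, (if k ∈ S then b k else 0) ^ α k)
        = ∑ α ∈ ν.support, MvPolynomial.coeff α ν *
            ((if α.support.card ≤ i then ((q - α.support.card).choose (i - α.support.card) : ℝ) else 0)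
              * ∏ k, b k ^ α k) := by
    intro i
    rw [Finset.sum_comm]
    refine Finset.sum_congr rfl fun α _ => ?_
    rw [← Finset.mul_sum, sum_cut_monomial]
  simp only [step1]
  simp only [Finset.mul_sum]
  rw [Finset.sum_comm]
  refine Finset.sum_congr rfl fun α hα => ?_
  have ht := hν α hα
  have key := inner_sum_eq_one q s α.support.card ht hs
  calc ∑ i ∈ range (s+1), (-1:ℝ)^(s-i) * ((q-i-1).choose (s-i)) *
        (MvPolynomial.coeff α ν *
          ((if α.support.card ≤ i then ((q - α.support.card).choose (i - α.support.card) : ℝ) else 0)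
            * ∏ k, b k ^ α k))
      = (MvPolynomial.coeff α ν * ∏ k, b k ^ α k) *
          ∑ i ∈ range (s+1), (-1:ℝ)^(s-i) * ((q-i-1).choose (s-i)) *
            (if α.support.card ≤ i then ((q - α.support.card).choose (i - α.support.card) : ℝ) else 0) := by
        rw [Finset.mul_sum]; exact Finset.sum_congr rfl fun i _ => by ring
    _ = MvPolynomial.coeff α ν * ∏ k, b k ^ α k := by rw [key, mul_one]
end

section
/- For a monomial m in exactly w distinct variables with 1 ≤ w ≤ s < q, the Cut-HDMR approximation satisfies m̂_s = m; equivalently, ∑_{i=w}^{s} (-1)^{s-i} C(q-i-1, s-i) C(q-w, i-w) = 1. -/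
open Finset


lemma altsum (t : ℕ) (ht : t ≠ 0) : ∑ j ∈ range (t+1), (-1:ℝ)^j * (t.choose j) = 0 := by
  have h := Int.alternating_sum_range_choose_of_ne ht
  have h2 : ((∑ i ∈ range (t+1), (-1:ℤ)^i * (t.choose i) : ℤ) : ℝ) = 0 := by rw [h]; simp
  push_cast at h2
  convert h2 using 2 with j

lemma keyD (n t : ℕ) (ht : 1 ≤ t) (htn : t ≤ n) :
    ∑ j ∈ range (t+1), (-1:ℝ)^(t-j) * (n.choose j) * ((n-j).choose (t-j)) = 0 := by
  have h1 : ∀ j ∈ range (t+1), (-1:ℝ)^(t-j) * (n.choose j) * ((n-j).choose (t-j))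
      = ((n.choose t) * (-1:ℝ)^t) * ((-1:ℝ)^j * (t.choose j)) := by
    intro j hj
    have hj' : j ≤ t := Nat.lt_succ_iff.mp (mem_range.mp hj)
    have hc : (n.choose t : ℝ) * (t.choose j) = (n.choose j) * ((n-j).choose (t-j)) := by
      exact_mod_cast congrArg (Nat.cast (R := ℝ)) (Nat.choose_mul (n := n) hj')
    have hs : (-1:ℝ)^(t-j) * (-1:ℝ)^j = (-1:ℝ)^t := by
      rw [← pow_add, Nat.sub_add_cancel hj']
    have hsq : ((-1:ℝ)^j) * ((-1:ℝ)^j) = 1 := by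
      rw [← pow_add]; exact Even.neg_one_pow ⟨j, rfl⟩
    have hs2 : (-1:ℝ)^t * (-1:ℝ)^j = (-1:ℝ)^(t-j) := by
      rw [← hs, mul_assoc, hsq, mul_one]
    symm
    calc ((n.choose t : ℝ) * (-1:ℝ)^t) * ((-1:ℝ)^j * (t.choose j))
        = ((-1:ℝ)^t * (-1:ℝ)^j) * ((n.choose t : ℝ) * (t.choose j)) := by ring
      _ = (-1:ℝ)^(t-j) * ((n.choose j : ℝ) * ((n-j).choose (t-j))) := by rw [hs2, hc]
      _ = (-1:ℝ)^(t-j) * (n.choose j) * ((n-j).choose (t-j)) := by ring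
  rw [Finset.sum_congr rfl h1, ← Finset.mul_sum, altsum t (by omega), mul_zero]

lemma keyA : ∀ t : ℕ, ∀ n : ℕ, t ≤ n →
    ∑ j ∈ range (t+1), (-1:ℝ)^(t-j) * ((n+1).choose j) * ((n-j).choose (t-j)) = 1 := by
  intro t
  induction t with
  | zero => intro n _; simp
  | succ t IH =>
    intro n hn
    obtain ⟨m, rfl⟩ : ∃ m, n = m + 1 := ⟨n - 1, by omega⟩
    have hD := keyD (m+1) (t+1) (by omega) (by omega)
    rw [Finset.sum_range_succ'] at hD ⊢
    simp only [Nat.succ_sub_succ, Nat.sub_zero, Nat.choose_zero_right, Nat.cast_one,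
      mul_one, one_mul] at hD ⊢
    have hIH := IH m (by omega)
    have expand : ∀ j ∈ range (t+1),
        (-1:ℝ)^(t-j) * ((m+1+1).choose (j+1)) * ((m-j).choose (t-j))
        = (-1:ℝ)^(t-j) * ((m+1).choose j) * ((m-j).choose (t-j))
          + (-1:ℝ)^(t-j) * ((m+1).choose (j+1)) * ((m-j).choose (t-j)) := by
      intro j hj
      have h : (m+1+1).choose (j+1) = (m+1).choose j + (m+1).choose (j+1) :=
        Nat.choose_succ_succ' (m+1) j
      rw [h]; push_cast; ring
    rw [Finset.sum_congr rfl expand, Finset.sum_add_distrib, hIH]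
    linarith [hD]


lemma card_supersets {α : Type*} [DecidableEq α] [Fintype α] (A : Finset α) (i : ℕ)
    (hi : A.card ≤ i) :
    (((univ : Finset α).powersetCard i).filter (fun S => A ⊆ S)).card
      = (Fintype.card α - A.card).choose (i - A.card) := by
  have hcard : ((univ : Finset α) \ A).card = Fintype.card α - A.card := by
    rw [sdiff_eq_inter_compl, univ_inter, card_compl]
  rw [← hcard, ← Finset.card_powersetCard]
  apply Finset.card_bij (fun S _ => S \ A)
  · intro S hS
    simp only [mem_filter, mem_powersetCard] at hS
    obtain ⟨⟨_, hScard⟩, hAS⟩ := hS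
    simp only [mem_powersetCard]
    exact ⟨sdiff_subset_sdiff (subset_univ S) le_rfl, by rw [card_sdiff_of_subset hAS, hScard]⟩
  · intro S1 h1 S2 h2 heq
    simp only [mem_filter, mem_powersetCard] at h1 h2
    have e1 : S1 = (S1 \ A) ∪ A := by rw [sdiff_union_self_eq_union, union_eq_left.mpr h1.2]
    have e2 : S2 = (S2 \ A) ∪ A := by rw [sdiff_union_self_eq_union, union_eq_left.mpr h2.2]
    rw [e1, e2, heq]
  · intro T hT
    simp only [mem_powersetCard] at hT
    obtain ⟨hTsub, hTcard⟩ := hT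
    have hdisj : Disjoint T A := by
      intro x hx1 hx2 y hy
      have := hTsub (hx1 hy)
      simp only [mem_sdiff] at this
      exact absurd (hx2 hy) this.2
    refine ⟨T ∪ A, ?_, ?_⟩
    · simp only [mem_filter, mem_powersetCard]
      refine ⟨⟨subset_univ _, ?_⟩, subset_union_right⟩
      rw [card_union_of_disjoint hdisj, hTcard]
      omega
    · rw [union_sdiff_right, sdiff_eq_self_of_disjoint hdisj]

lemma cutComponent_monomial {q : ℕ} (a : Fin q →₀ ℕ) (S : Finset (Fin q)) (b : Fin q → ℝ) :
    cutComponent (fun x => ∏ k, x k ^ a k) S b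
      = if a.support ⊆ S then ∏ k, b k ^ a k else 0 := by
  unfold cutComponent
  split_ifs with h
  · apply Finset.prod_congr rfl
    intro k _
    by_cases hk : k ∈ S
    · simp [hk]
    · have : a k = 0 := by
        by_contra hak
        exact hk (h (Finsupp.mem_support_iff.mpr hak))
      simp [hk, this]
  · obtain ⟨k, hk, hkS⟩ := Finset.not_subset.mp h
    apply Finset.prod_eq_zero (Finset.mem_univ k)
    have : a k ≠ 0 := Finsupp.mem_support_iff.mp hk
    simp [hkS, zero_pow this]

/-- For a monomial `m(b) = ∏ b_k^{a_k}` in exactly `w` distinct variables with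
`1 ≤ w ≤ s < q`, the Cut-HDMR approximation reproduces it exactly: `m̂_s = m`. -/
theorem cutHDMR_monomial_low_interaction (q s w : ℕ) (hsq : s < q)
    (a : Fin q →₀ ℕ) (hw : a.support.card = w) (hw1 : 1 ≤ w) (hws : w ≤ s) (b : Fin q → ℝ) :
    cutHDMR s (fun x => ∏ k, x k ^ a k) b = ∏ k, b k ^ a k := by
  set M : ℝ := ∏ k, b k ^ a k with hM
  have hinner : ∀ i : ℕ,
      ∑ S ∈ (Finset.univ : Finset (Fin q)).powersetCard i,
        cutComponent (fun x => ∏ k, x k ^ a k) S b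
      = (if w ≤ i then ((q - w).choose (i - w) : ℝ) else 0) * M := by
    intro i
    have h1 : ∀ S ∈ (Finset.univ : Finset (Fin q)).powersetCard i,
        cutComponent (fun x => ∏ k, x k ^ a k) S b
          = if a.support ⊆ S then M else 0 := fun S _ => cutComponent_monomial a S b
    rw [Finset.sum_congr rfl h1, ← Finset.sum_filter, Finset.sum_const, nsmul_eq_mul]
    by_cases hwi : w ≤ i
    · rw [if_pos hwi, card_supersets a.support i (by omega)]
      simp [hw]
    · rw [if_neg hwi]
      have : (((univ : Finset (Fin q)).powersetCard i).filter
          (fun S => a.support ⊆ S)) = ∅ := by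
        apply Finset.filter_false_of_mem
        intro S hS hsub
        simp only [mem_powersetCard] at hS
        have := Finset.card_le_card hsub
        omega
      rw [this]
      simp
  unfold cutHDMR
  have h2 : ∀ i ∈ Finset.range (s+1),
      (-1 : ℝ) ^ (s - i) * (Nat.choose (q - i - 1) (s - i)) *
        ∑ S ∈ (Finset.univ : Finset (Fin q)).powersetCard i,
          cutComponent (fun x => ∏ k, x k ^ a k) S b
      = ((-1 : ℝ) ^ (s - i) * (Nat.choose (q - i - 1) (s - i)) *
          (if w ≤ i then ((q - w).choose (i - w) : ℝ) else 0)) * M := by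
    intro i _
    rw [hinner i]; ring
  rw [Finset.sum_congr rfl h2, ← Finset.sum_mul]
  have hcoeff : ∑ i ∈ Finset.range (s+1),
      (-1 : ℝ) ^ (s - i) * (Nat.choose (q - i - 1) (s - i)) *
        (if w ≤ i then ((q - w).choose (i - w) : ℝ) else 0) = 1 := by
    rw [Finset.range_eq_Ico, ← Finset.sum_Ico_consecutive _ (Nat.zero_le w) (by omega : w ≤ s+1)]
    have hz : ∑ i ∈ Finset.Ico 0 w,
        (-1 : ℝ) ^ (s - i) * (Nat.choose (q - i - 1) (s - i)) *
          (if w ≤ i then ((q - w).choose (i - w) : ℝ) else 0) = 0 := by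
      apply Finset.sum_eq_zero
      intro i hi
      simp only [Finset.mem_Ico] at hi
      rw [if_neg (by omega), mul_zero]
    rw [hz, zero_add, Finset.sum_Ico_eq_sum_range]
    have hne : s + 1 - w = (s - w) + 1 := by omega
    rw [hne]
    have h3 : ∀ j ∈ Finset.range ((s-w)+1),
        (-1 : ℝ) ^ (s - (w+j)) * (Nat.choose (q - (w+j) - 1) (s - (w+j))) *
          (if w ≤ w + j then ((q - w).choose (w + j - w) : ℝ) else 0)
        = (-1 : ℝ) ^ ((s-w) - j) * (((q-w-1) + 1).choose j) *
            (((q-w-1) - j).choose ((s-w) - j)) := by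
      intro j hj
      rw [if_pos (by omega)]
      have e1 : s - (w+j) = (s-w) - j := by omega
      have e2 : q - (w+j) - 1 = (q-w-1) - j := by omega
      have e3 : w + j - w = j := by omega
      have e4 : (q-w-1) + 1 = q - w := by omega
      rw [e1, e2, e3, e4]
      ring
    rw [Finset.sum_congr rfl h3]
    have h4 : ∀ j ∈ Finset.range ((s-w)+1),
        (-1 : ℝ) ^ ((s-w) - j) * (((q-w-1) + 1).choose j) *
            (((q-w-1) - j).choose ((s-w) - j))
        = (-1 : ℝ) ^ ((s-w) - j) * (((q-w-1) + 1).choose j) *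
            (((q-w-1) - j).choose ((s-w) - j)) := fun _ _ => rfl
    exact keyA (s-w) (q-w-1) (by omega)
  rw [hcoeff, one_mul]
end
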